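/- Let R be a commutative ring, M an R-module, n a natural number, and ω : M → M → R an alternating bilinear form on M (i.e. a bilinear form with ω(v,v) = 0 for all v). Regard ω as an alternating 2-form and let ω^{∧n} denote its n-fold wedge power, an alternating 2n-linear form on M, using the shuffle-sum convention for the wedge product of alternating forms (no denominators). Then for all v_1, …, v_{2n} ∈ M one has 2^n · ω^{∧n}(v_1, …, v_{2n}) = Σ_{σ ∈ S_{2n}} sgn(σ) · ∏_{i=1}^{n} ω(v_{σ(2i−1)}, v_{σ(2i)}), where the sum is over all permutations σ of {1, …, 2n}. -/

import Mathlib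

/-- The `n`-fold wedge power of an alternating bilinear form `ω`, as an alternating
`2n`-linear form, using the shuffle-sum convention (no denominators) for the wedge
product of alternating forms: iterating the shuffle wedge product of `ω` with itself
`n` times yields the sum over all permutations `σ` of `{1, …, 2n}` that are increasing
on each consecutive block of two indices. -/
noncomputable def wedgePow {R M : Type*} [CommRing R] [AddCommGroup M] [Module R M]
    (ω : M →ₗ[R] M →ₗ[R] R) (n : ℕ) : (Fin (2 * n) → M) → R := fun v =>
  ∑ σ ∈ Finset.univ.filter (fun σ : Equiv.Perm (Fin (2 * n)) =>
      ∀ i : Fin n, σ ⟨2 * i, by have := i.isLt; omega⟩ < σ ⟨2 * i + 1, by have := i.isLt; omega⟩),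
    (Equiv.Perm.sign σ : ℤ) •
      ∏ i : Fin n,
        ω (v (σ ⟨2 * i, by have := i.isLt; omega⟩))
          (v (σ ⟨2 * i + 1, by have := i.isLt; omega⟩))




variable {n : ℕ}

def e0 (n : ℕ) (i : Fin n) : Fin (2 * n) := ⟨2 * i, by have := i.isLt; omega⟩
def e1 (n : ℕ) (i : Fin n) : Fin (2 * n) := ⟨2 * i + 1, by have := i.isLt; omega⟩

def flipFun (s : Fin n → Bool) (k : Fin (2 * n)) : Fin (2 * n) :=
  if s ⟨k / 2, by have := k.isLt; omega⟩ then
    ⟨2 * (k / 2) + 1 - k % 2, by have := k.isLt; omega⟩ else k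

lemma flipFun_inv (s : Fin n → Bool) : Function.Involutive (flipFun s) := by
  intro k
  unfold flipFun
  split_ifs with h
  · have hb : (⟨(2 * (k / 2) + 1 - (k:ℕ) % 2) / 2, by have := k.isLt; omega⟩ : Fin n)
      = ⟨k / 2, by have := k.isLt; omega⟩ := Fin.ext (by simp; omega)
    simp only [hb, h, if_true]
    exact Fin.ext (by simp; omega)
  · rfl

def flipPerm (s : Fin n → Bool) : Equiv.Perm (Fin (2 * n)) :=
  (flipFun_inv s).toPerm

lemma flipPerm_e0 (s : Fin n → Bool) (i : Fin n) :
    flipPerm s (e0 n i) = if s i then e1 n i else e0 n i := by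
  have : (⟨(e0 n i : ℕ) / 2, by have := (e0 n i).isLt; omega⟩ : Fin n) = i := Fin.ext (by simp only [e0]; omega)
  simp only [flipPerm, Function.Involutive.toPerm, Equiv.coe_fn_mk, flipFun, this]
  split_ifs with h
  · exact Fin.ext (by simp only [e0, e1]; omega)
  · rfl

lemma flipPerm_e1 (s : Fin n → Bool) (i : Fin n) :
    flipPerm s (e1 n i) = if s i then e0 n i else e1 n i := by
  have : (⟨(e1 n i : ℕ) / 2, by have := (e1 n i).isLt; omega⟩ : Fin n) = i := Fin.ext (by simp only [e1]; omega)
  simp only [flipPerm, Function.Involutive.toPerm, Equiv.coe_fn_mk, flipFun, this]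
  split_ifs with h
  · exact Fin.ext (by simp only [e0, e1]; omega)
  · rfl

lemma flipPerm_mul_self (s : Fin n → Bool) : flipPerm s * flipPerm s = 1 := by
  ext k
  show (flipFun s (flipFun s k) : ℕ) = k
  rw [flipFun_inv s k]

section
variable {R M : Type*} [CommRing R] [AddCommGroup M] [Module R M]
variable (ω : M →ₗ[R] M →ₗ[R] R) (v : Fin (2 * n) → M)

noncomputable def F (σ : Equiv.Perm (Fin (2 * n))) : R :=
  (Equiv.Perm.sign σ : ℤ) • ∏ i : Fin n, ω (v (σ (e0 n i))) (v (σ (e1 n i)))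

lemma e0_ne_e1 (i : Fin n) : e0 n i ≠ e1 n i := by
  simp only [e0, e1, ne_eq, Fin.mk.injEq]; omega

lemma F_mul_swap (hω : ∀ x : M, ω x x = 0) (σ : Equiv.Perm (Fin (2 * n))) (i : Fin n) :
    F ω v (σ * Equiv.swap (e0 n i) (e1 n i)) = F ω v σ := by
  have hskew : ∀ x y : M, ω x y = -ω y x := by
    intro x y
    have h := hω (x + y)
    simp only [map_add, LinearMap.add_apply, hω] at h
    linear_combination h
  unfold F
  rw [map_mul, Equiv.Perm.sign_swap (e0_ne_e1 i)]
  have hprod : (∏ j : Fin n, ω (v ((σ * Equiv.swap (e0 n i) (e1 n i)) (e0 n j)))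
        (v ((σ * Equiv.swap (e0 n i) (e1 n i)) (e1 n j))))
      = - ∏ j : Fin n, ω (v (σ (e0 n j))) (v (σ (e1 n j))) := by
    rw [← Finset.mul_prod_erase Finset.univ _ (Finset.mem_univ i),
        ← Finset.mul_prod_erase Finset.univ
          (fun j => ω (v (σ (e0 n j))) (v (σ (e1 n j)))) (Finset.mem_univ i)]
    have h1 : ∀ j ∈ Finset.univ.erase i,
        ω (v ((σ * Equiv.swap (e0 n i) (e1 n i)) (e0 n j)))
          (v ((σ * Equiv.swap (e0 n i) (e1 n i)) (e1 n j)))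
        = ω (v (σ (e0 n j))) (v (σ (e1 n j))) := by
      intro j hj
      have hji : j ≠ i := (Finset.mem_erase.mp hj).1
      have h00 : e0 n j ≠ e0 n i := by
        simp only [e0, ne_eq, Fin.mk.injEq]
        exact fun h => hji (Fin.ext (by omega))
      have h01 : e0 n j ≠ e1 n i := by
        simp only [e0, e1, ne_eq, Fin.mk.injEq]; omega
      have h10 : e1 n j ≠ e0 n i := by
        simp only [e0, e1, ne_eq, Fin.mk.injEq]; omega
      have h11 : e1 n j ≠ e1 n i := by
        simp only [e1, ne_eq, Fin.mk.injEq]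
        exact fun h => hji (Fin.ext (by omega))
      simp [Equiv.Perm.mul_apply, Equiv.swap_apply_of_ne_of_ne h00 h01,
        Equiv.swap_apply_of_ne_of_ne h10 h11]
    rw [Finset.prod_congr rfl h1]
    have h2 : ω (v ((σ * Equiv.swap (e0 n i) (e1 n i)) (e0 n i)))
        (v ((σ * Equiv.swap (e0 n i) (e1 n i)) (e1 n i)))
        = - ω (v (σ (e0 n i))) (v (σ (e1 n i))) := by
      simp only [Equiv.Perm.mul_apply, Equiv.swap_apply_left, Equiv.swap_apply_right]
      rw [hskew]
    rw [h2, neg_mul]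
  rw [hprod]
  simp [neg_smul, smul_neg]

end

lemma flipPerm_apply_eq_flipFun (s : Fin n → Bool) (k : Fin (2 * n)) :
    flipPerm s k = flipFun s k := rfl

lemma flipFun_div_two (s : Fin n → Bool) (k : Fin (2 * n)) :
    ((flipFun s k : Fin (2 * n)) : ℕ) / 2 = (k : ℕ) / 2 := by
  unfold flipFun; split_ifs <;> simp <;> omega

lemma flipPerm_decomp (s : Fin n → Bool) (i : Fin n) (hs : s i = true) :
    flipPerm s = Equiv.swap (e0 n i) (e1 n i) * flipPerm (Function.update s i false) := by
  ext k
  show ((flipPerm s k : Fin (2*n)) : ℕ)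
      = ((Equiv.swap (e0 n i) (e1 n i) (flipPerm (Function.update s i false) k) : Fin (2*n)) : ℕ)
  by_cases hj : (⟨(k : ℕ) / 2, by have := k.isLt; omega⟩ : Fin n) = i
  · have hk : k = e0 n i ∨ k = e1 n i := by
      have hv : (k : ℕ) / 2 = (i : ℕ) := congrArg Fin.val hj
      by_cases hp : (k : ℕ) % 2 = 0
      · left; exact Fin.ext (by simp only [e0]; omega)
      · right; exact Fin.ext (by simp only [e1]; omega)
    have hupd : Function.update s i false i = false := by simp
    rcases hk with hk | hk <;> subst hk
    · rw [flipPerm_e0 s i, flipPerm_e0 (Function.update s i false) i, hs, hupd]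
      simp [Equiv.swap_apply_left]
    · rw [flipPerm_e1 s i, flipPerm_e1 (Function.update s i false) i, hs, hupd]
      simp [Equiv.swap_apply_right]
  · have hupd : Function.update s i false ⟨(k : ℕ) / 2, by have := k.isLt; omega⟩
        = s ⟨(k : ℕ) / 2, by have := k.isLt; omega⟩ := Function.update_of_ne hj _ _
    have heq : flipPerm (Function.update s i false) k = flipPerm s k := by
      show flipFun (Function.update s i false) k = flipFun s k
      unfold flipFun
      rw [hupd]
    rw [heq]
    have hvne : ((k : ℕ) / 2) ≠ (i : ℕ) := fun h => hj (Fin.ext h)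
    have hd : ((flipPerm s k : Fin (2*n)) : ℕ) / 2 = (k : ℕ) / 2 := flipFun_div_two s k
    have hne0 : flipPerm s k ≠ e0 n i := by
      intro h
      rw [h] at hd
      simp only [e0] at hd
      omega
    have hne1 : flipPerm s k ≠ e1 n i := by
      intro h
      rw [h] at hd
      simp only [e1] at hd
      omega
    rw [Equiv.swap_apply_of_ne_of_ne hne0 hne1]

lemma flipPerm_false : flipPerm (fun _ : Fin n => false) = 1 := by
  ext k
  show ((flipFun (fun _ => false) k : Fin (2*n)) : ℕ) = (k : ℕ)
  unfold flipFun
  simp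

section
variable {R M : Type*} [CommRing R] [AddCommGroup M] [Module R M]
variable (ω : M →ₗ[R] M →ₗ[R] R) (v : Fin (2 * n) → M)

lemma F_mul_flip (hω : ∀ x : M, ω x x = 0) (s : Fin n → Bool) (σ : Equiv.Perm (Fin (2 * n))) :
    F ω v (σ * flipPerm s) = F ω v σ := by
  suffices H : ∀ c (s : Fin n → Bool),
      (Finset.univ.filter (fun i => s i = true)).card = c →
      ∀ σ, F ω v (σ * flipPerm s) = F ω v σ from H _ s rfl σ
  intro c
  induction c with
  | zero =>
    intro s hc σ
    have hall : ∀ i, s i = false := by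
      intro i
      by_contra h
      have hi : s i = true := by
        cases hsi : s i
        · exact absurd hsi h
        · rfl
      have : i ∈ Finset.univ.filter (fun i => s i = true) := by simp [hi]
      have := Finset.card_pos.mpr ⟨i, this⟩
      omega
    have : s = fun _ => false := funext hall
    rw [this, flipPerm_false, mul_one]
  | succ c ih =>
    intro s hc σ
    have hex : ∃ i, s i = true := by
      by_contra h
      push_neg at h
      have : Finset.univ.filter (fun i => s i = true) = ∅ := by
        ext i; simp [h i]
      rw [this] at hc
      simp at hc
    obtain ⟨i, hi⟩ := hex
    have hcard : (Finset.univ.filter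
        (fun j => Function.update s i false j = true)).card = c := by
      have hset : Finset.univ.filter (fun j => Function.update s i false j = true)
          = (Finset.univ.filter (fun j => s j = true)).erase i := by
        ext j
        by_cases hji : j = i
        · subst hji; simp
        · simp [Function.update_of_ne hji, hji]
      rw [hset, Finset.card_erase_of_mem (by simp [hi]), hc]; omega
    rw [flipPerm_decomp s i hi, ← mul_assoc, ih _ hcard, F_mul_swap ω v hω]

end

lemma mul_flip_flip (σ : Equiv.Perm (Fin (2 * n))) (s : Fin n → Bool) :
    (σ * flipPerm s) * flipPerm s = σ := by
  rw [mul_assoc, flipPerm_mul_self, mul_one]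

lemma mul_flip_e0 (σ : Equiv.Perm (Fin (2 * n))) (s : Fin n → Bool) (i : Fin n) :
    (σ * flipPerm s) (e0 n i) = if s i then σ (e1 n i) else σ (e0 n i) := by
  rw [Equiv.Perm.mul_apply, flipPerm_e0]
  split_ifs <;> rfl

lemma mul_flip_e1 (σ : Equiv.Perm (Fin (2 * n))) (s : Fin n → Bool) (i : Fin n) :
    (σ * flipPerm s) (e1 n i) = if s i then σ (e0 n i) else σ (e1 n i) := by
  rw [Equiv.Perm.mul_apply, flipPerm_e1]
  split_ifs <;> rfl

section
variable {R M : Type*} [CommRing R] [AddCommGroup M] [Module R M]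
variable (ω : M →ₗ[R] M →ₗ[R] R) (v : Fin (2 * n) → M)

lemma key (hω : ∀ x : M, ω x x = 0) :
    ∑ σ : Equiv.Perm (Fin (2 * n)), F ω v σ
      = (2 ^ n : ℕ) • ∑ σ ∈ Finset.univ.filter
          (fun σ : Equiv.Perm (Fin (2 * n)) => ∀ i : Fin n, σ (e0 n i) < σ (e1 n i)),
          F ω v σ := by
  classical
  set P := Finset.univ.filter
    (fun σ : Equiv.Perm (Fin (2 * n)) => ∀ i : Fin n, σ (e0 n i) < σ (e1 n i)) with hP
  have hbij : ∑ σ : Equiv.Perm (Fin (2 * n)), F ω v σ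
      = ∑ p ∈ (Finset.univ : Finset (Fin n → Bool)) ×ˢ P, F ω v (p.2 * flipPerm p.1) := by
    apply Finset.sum_nbij'
      (fun σ => ((fun i => decide (σ (e1 n i) < σ (e0 n i))),
        σ * flipPerm (fun i => decide (σ (e1 n i) < σ (e0 n i)))))
      (fun p => p.2 * flipPerm p.1)
    · intro σ _
      rw [Finset.mem_product]
      refine ⟨Finset.mem_univ _, ?_⟩
      rw [hP, Finset.mem_filter]
      refine ⟨Finset.mem_univ _, fun i => ?_⟩
      rw [mul_flip_e0, mul_flip_e1]
      by_cases h : σ (e1 n i) < σ (e0 n i)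
      · simp only [h, decide_eq_true h, if_true]
        exact h
      · simp only [h, decide_eq_false h, if_false]
        have hne : σ (e0 n i) ≠ σ (e1 n i) := fun hc => e0_ne_e1 i (σ.injective hc)
        exact lt_of_le_of_ne (le_of_not_gt h) hne
    · intro p _
      exact Finset.mem_univ _
    · intro σ _
      exact mul_flip_flip σ _
    · intro p hp
      rw [Finset.mem_product, hP, Finset.mem_filter] at hp
      obtain ⟨-, -, hp2⟩ := hp
      have h1 : (fun i => decide ((p.2 * flipPerm p.1) (e1 n i)
          < (p.2 * flipPerm p.1) (e0 n i))) = p.1 := by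
        funext i
        rw [mul_flip_e0, mul_flip_e1]
        cases hs : p.1 i
        · simp only [Bool.false_eq_true, if_false]
          exact decide_eq_false (not_lt_of_gt (hp2 i))
        · simp only [if_true]
          exact decide_eq_true (hp2 i)
      rw [Prod.ext_iff]
      refine ⟨h1, ?_⟩
      show (p.2 * flipPerm p.1) * flipPerm (fun i => decide _) = p.2
      rw [h1, mul_flip_flip]
    · intro σ _
      rw [mul_flip_flip]
  rw [hbij, Finset.sum_product]
  have hinner : ∀ s : Fin n → Bool,
      ∑ σ ∈ P, F ω v (σ * flipPerm s) = ∑ σ ∈ P, F ω v σ :=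
    fun s => Finset.sum_congr rfl fun σ _ => F_mul_flip ω v hω s σ
  rw [Finset.sum_congr rfl fun s _ => hinner s, Finset.sum_const, Finset.card_univ]
  congr 1
  simp

end


/-- `2^n · ω^{∧n}(v_1, …, v_{2n}) = Σ_{σ ∈ S_{2n}} sgn(σ) ∏_{i=1}^n ω(v_{σ(2i-1)}, v_{σ(2i)})`
for an alternating bilinear form `ω` on a module `M` over a commutative ring `R`. -/
theorem two_pow_mul_wedgePow_eq_sum_perm {R M : Type*} [CommRing R] [AddCommGroup M]
    [Module R M] (n : ℕ) (ω : M →ₗ[R] M →ₗ[R] R) (hω : ∀ v : M, ω v v = 0)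
    (v : Fin (2 * n) → M) :
    (2 : R) ^ n * wedgePow ω n v =
      ∑ σ : Equiv.Perm (Fin (2 * n)),
        (Equiv.Perm.sign σ : ℤ) •
          ∏ i : Fin n,
            ω (v (σ ⟨2 * i, by have := i.isLt; omega⟩))
              (v (σ ⟨2 * i + 1, by have := i.isLt; omega⟩)) := by
  have h2 : (2 : R) ^ n = ((2 ^ n : ℕ) : R) := by push_cast; ring
  rw [h2, ← nsmul_eq_mul]
  exact (key ω v hω).symm
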